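/- Linearization identity from the Rogers formula (Corollary 3.2): for every q ∈ ℂ with |q| < 1, all x, y ∈ ℂ, and all integers n, m ≥ 0, ∑_{k=0}^{n} ∑_{l=0}^{m} [n,k]_q [m,l]_q (y;q)_k P_l(x,y) h_{n+m-k-l}(x,y|q) = ∑_{k=0}^{n} ∑_{l=0}^{m} [n,k]_q [m,l]_q (y;q)_k q^{kl} P_l(x,y) h_{n-k}(x,y|q) h_{m-l}(x,y|q). (Note that (y/x;q)_l x^l = P_l(x,y) and (y/x;q)_l (x q^k)^l = q^{kl} P_l(x,y), so this is the identity ∑∑ [n,k][m,l](y;q)_k (y/x;q)_l x^l h_{n+m-k-l} = ∑∑ [n,k][m,l](y;q)_k (y/x;q)_l (xq^k)^l h_{n-k} h_{m-l} written without division by x.) -/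

import Mathlib

/-- The q-shifted factorial `(a;q)_n = ∏_{k=0}^{n-1} (1 - a q^k)`. -/
noncomputable def qPoch (a q : ℂ) (n : ℕ) : ℂ :=
  ∏ k ∈ Finset.range n, (1 - a * q ^ k)

/-- The infinite q-shifted factorial `(a;q)_∞ = ∏_{k=0}^{∞} (1 - a q^k)`. -/
noncomputable def qPochInf (a q : ℂ) : ℂ :=
  ∏' k : ℕ, (1 - a * q ^ k)

/-- The Gaussian binomial coefficient `[n,k]_q`. -/
noncomputable def qBinom (q : ℂ) (n k : ℕ) : ℂ :=
  qPoch q q n / (qPoch q q k * qPoch q q (n - k))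

/-- The Cauchy polynomial `P_n(x,y) = ∏_{k=0}^{n-1} (x - q^k y)`. -/
noncomputable def cauchyP (q x y : ℂ) (n : ℕ) : ℂ :=
  ∏ k ∈ Finset.range n, (x - q ^ k * y)

/-- The bivariate Rogers–Szegő polynomial `h_n(x,y|q)`. -/
noncomputable def hRS2 (q x y : ℂ) (n : ℕ) : ℂ :=
  ∑ k ∈ Finset.range (n + 1), qBinom q n k * cauchyP q x y k

/-- The Rogers–Szegő polynomial `h_n(x|q)`. -/
noncomputable def hRS (q x : ℂ) (n : ℕ) : ℂ :=
  ∑ k ∈ Finset.range (n + 1), qBinom q n k * x ^ k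

/-- The continuous big q-Hermite polynomial `H_n(cos θ; a | q)`. -/
noncomputable def bigH (q a θ : ℂ) (n : ℕ) : ℂ :=
  ∑ k ∈ Finset.range (n + 1),
    qBinom q n k * qPoch (a * Complex.exp (Complex.I * θ)) q k *
      Complex.exp (Complex.I * ((n : ℂ) - 2 * (k : ℂ)) * θ)

namespace RogersAux

open PowerSeries Finset

lemma qPoch_zero (a q : ℂ) : qPoch a q 0 = 1 := by simp [qPoch]

lemma qPoch_succ (a q : ℂ) (n : ℕ) :
    qPoch a q (n + 1) = qPoch a q n * (1 - a * q ^ n) := by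
  simp [qPoch, Finset.prod_range_succ]

lemma cauchyP_zero (q x y : ℂ) : cauchyP q x y 0 = 1 := by simp [cauchyP]

lemma cauchyP_succ (q x y : ℂ) (n : ℕ) :
    cauchyP q x y (n + 1) = cauchyP q x y n * (x - q ^ n * y) := by
  simp [cauchyP, Finset.prod_range_succ]

lemma cauchyP_one_left (q v : ℂ) (n : ℕ) : cauchyP q 1 v n = qPoch v q n := by
  unfold cauchyP qPoch
  exact Finset.prod_congr rfl fun k _ => by ring

lemma cauchyP_zero_right (q u : ℂ) (n : ℕ) : cauchyP q u 0 n = u ^ n := by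
  simp [cauchyP]

variable {q : ℂ} (hq : ‖q‖ < 1)

include hq in
lemma qpow_ne_one (n : ℕ) : q ^ (n + 1) ≠ 1 := by
  intro h
  have : ‖q ^ (n + 1)‖ < 1 := by
    rw [norm_pow]
    exact pow_lt_one₀ (norm_nonneg q) hq n.succ_ne_zero
  rw [h, norm_one] at this
  exact lt_irrefl 1 this

include hq in
lemma qPoch_q_ne_zero (n : ℕ) : qPoch q q n ≠ 0 := by
  unfold qPoch
  rw [Finset.prod_ne_zero_iff]
  intro k _
  have : q * q ^ k = q ^ (k + 1) := by ring
  rw [this, sub_ne_zero]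
  exact fun h => qpow_ne_one hq k h.symm

include hq in
lemma qBinom_zero' (n : ℕ) : qBinom q n 0 = 1 := by
  simp [qBinom, qPoch_zero, div_self (qPoch_q_ne_zero hq n)]

include hq in
lemma qBinom_self (n : ℕ) : qBinom q n n = 1 := by
  simp [qBinom, qPoch_zero, div_self (qPoch_q_ne_zero hq n)]


/-! ### Power series -/

local notation "PS" => PowerSeries ℂ
local notation "CC" => PowerSeries.C (R := ℂ)

noncomputable def CSer (q u v : ℂ) : PowerSeries ℂ :=
  PowerSeries.mk fun n => cauchyP q u v n / qPoch q q n

noncomputable def FSer (q x y : ℂ) : PowerSeries ℂ := CSer q x y * CSer q 1 0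

noncomputable def GSer (q x y : ℂ) (a : ℕ) : PowerSeries ℂ :=
  PowerSeries.mk fun b => hRS2 q x y (a + b) / qPoch q q b

lemma coeff_CSer (q u v : ℂ) (n : ℕ) :
    PowerSeries.coeff (R := ℂ) n (CSer q u v) = cauchyP q u v n / qPoch q q n := by
  simp [CSer]

lemma coeff_mul_one_sub_succ (f : PowerSeries ℂ) (z : ℂ) (n : ℕ) :
    PowerSeries.coeff (R := ℂ) (n + 1) (f * (1 - CC z * PowerSeries.X)) =
      PowerSeries.coeff (R := ℂ) (n + 1) f - z * PowerSeries.coeff (R := ℂ) n f := by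
  have h : f * (1 - CC z * PowerSeries.X) = f - CC z * (f * PowerSeries.X) := by ring
  rw [h, map_sub, PowerSeries.coeff_C_mul, PowerSeries.coeff_succ_mul_X]

lemma coeff_mul_one_sub_zero (f : PowerSeries ℂ) (z : ℂ) :
    PowerSeries.coeff (R := ℂ) 0 (f * (1 - CC z * PowerSeries.X)) = PowerSeries.coeff (R := ℂ) 0 f := by
  have h : f * (1 - CC z * PowerSeries.X) = f - CC z * (f * PowerSeries.X) := by ring
  rw [h, map_sub, PowerSeries.coeff_C_mul, PowerSeries.coeff_zero_mul_X, mul_zero, sub_zero]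

include hq in
lemma CSrel (u v : ℂ) :
    PowerSeries.rescale q (CSer q u v) * (1 - CC v * PowerSeries.X) =
      CSer q u v * (1 - CC u * PowerSeries.X) := by
  ext n
  cases n with
  | zero => rw [coeff_mul_one_sub_zero, coeff_mul_one_sub_zero, PowerSeries.coeff_rescale]; ring
  | succ n =>
      rw [coeff_mul_one_sub_succ, coeff_mul_one_sub_succ, PowerSeries.coeff_rescale,
        PowerSeries.coeff_rescale, coeff_CSer, coeff_CSer, cauchyP_succ, qPoch_succ]
      have h1 : qPoch q q n ≠ 0 := qPoch_q_ne_zero hq n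
      have h2 : (1 : ℂ) - q * q ^ n ≠ 0 := by
        rw [sub_ne_zero]
        intro h
        exact qpow_ne_one hq n (by rw [pow_succ, mul_comm, ← h])
      field_simp
      linear_combination cauchyP q u v n * (q ^ n * v - u) * mul_inv_cancel₀ h2

lemma rescale_one_sub_CX (r z : ℂ) :
    PowerSeries.rescale r (1 - CC z * PowerSeries.X) = 1 - CC (z * r) * PowerSeries.X := by
  ext n
  rw [PowerSeries.coeff_rescale]
  rcases n with _ | n
  · simp
  · rcases n with _ | n
    · simp [PowerSeries.coeff_one]; ring
    · simp [PowerSeries.coeff_one, PowerSeries.coeff_X]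

include hq in
lemma EsRel : PowerSeries.rescale q (CSer q 1 0) =
    CSer q 1 0 * (1 - CC 1 * PowerSeries.X) := by
  have h := CSrel hq 1 0
  rw [map_zero, zero_mul, sub_zero, mul_one] at h
  exact h

include hq in
lemma FsRel (x y : ℂ) :
    PowerSeries.rescale q (FSer q x y) * (1 - CC y * PowerSeries.X) =
      FSer q x y * ((1 - CC x * PowerSeries.X) * (1 - CC 1 * PowerSeries.X)) := by
  unfold FSer
  rw [map_mul]
  calc PowerSeries.rescale q (CSer q x y) * PowerSeries.rescale q (CSer q 1 0) *
        (1 - CC y * PowerSeries.X)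
      = (PowerSeries.rescale q (CSer q x y) * (1 - CC y * PowerSeries.X)) *
        PowerSeries.rescale q (CSer q 1 0) := by ring
    _ = (CSer q x y * (1 - CC x * PowerSeries.X)) *
        (CSer q 1 0 * (1 - CC 1 * PowerSeries.X)) := by rw [CSrel hq x y, EsRel hq]
    _ = _ := by ring

include hq in
lemma coeff_FSer (x y : ℂ) (n : ℕ) :
    PowerSeries.coeff (R := ℂ) n (FSer q x y) = hRS2 q x y n / qPoch q q n := by
  unfold FSer
  rw [PowerSeries.coeff_mul, Finset.Nat.sum_antidiagonal_eq_sum_range_succ_mk]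
  unfold hRS2
  rw [Finset.sum_div]
  refine Finset.sum_congr rfl fun k hk => ?_
  rw [coeff_CSer, coeff_CSer, cauchyP_zero_right, one_pow, qBinom]
  have h1 := qPoch_q_ne_zero hq k
  have h2 := qPoch_q_ne_zero hq (n - k)
  have h3 := qPoch_q_ne_zero hq n
  field_simp

include hq in
lemma GSer_zero (x y : ℂ) : GSer q x y 0 = FSer q x y := by
  ext n
  rw [GSer, PowerSeries.coeff_mk, coeff_FSer hq, Nat.zero_add]

include hq in
lemma GSer_shift (x y : ℂ) (a : ℕ) :
    PowerSeries.X * GSer q x y (a + 1) = GSer q x y a - PowerSeries.rescale q (GSer q x y a) := by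
  ext b
  rw [map_sub, PowerSeries.coeff_rescale]
  rcases b with _ | b
  · rw [mul_comm, PowerSeries.coeff_zero_mul_X]
    simp
  · rw [mul_comm, PowerSeries.coeff_succ_mul_X]
    simp only [GSer, PowerSeries.coeff_mk]
    have hb : qPoch q q b ≠ 0 := qPoch_q_ne_zero hq b
    have hb2 : (1 : ℂ) - q * q ^ b ≠ 0 := by
      rw [sub_ne_zero]
      intro h
      exact qpow_ne_one hq b (by rw [pow_succ, mul_comm, ← h])
    have harg : a + 1 + b = a + (b + 1) := by omega
    rw [harg, qPoch_succ]
    field_simp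
    ring

include hq in
lemma Delta_rel (x y : ℂ) (k : ℕ) :
    PowerSeries.rescale (q ^ (k + 1)) (CSer q x y) * (1 - CC (y * q ^ k) * PowerSeries.X) =
      PowerSeries.rescale (q ^ k) (CSer q x y) * (1 - CC (x * q ^ k) * PowerSeries.X) := by
  have h := congrArg (PowerSeries.rescale (q ^ k)) (CSrel hq x y)
  rw [map_mul, map_mul, PowerSeries.rescale_rescale, rescale_one_sub_CX,
    rescale_one_sub_CX] at h
  rw [← pow_succ' q k] at h
  exact h

include hq in
lemma qBinom_pascal {i a : ℕ} (h : i + 1 ≤ a) :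
    qBinom q (a + 1) (i + 1) = q ^ (i + 1) * qBinom q a (i + 1) + qBinom q a i := by
  obtain ⟨d, rfl⟩ : ∃ d, a = i + 1 + d := ⟨a - (i + 1), by omega⟩
  unfold qBinom
  have e1 : i + 1 + d + 1 - (i + 1) = d + 1 := by omega
  have e2 : i + 1 + d - (i + 1) = d := by omega
  have e3 : i + 1 + d - i = d + 1 := by omega
  rw [e1, e2, e3]
  have p1 : qPoch q q (i + 1 + d + 1) = qPoch q q (i + 1 + d) * (1 - q * q ^ (i + 1 + d)) :=
    qPoch_succ q q _
  have p2 : qPoch q q (d + 1) = qPoch q q d * (1 - q * q ^ d) := qPoch_succ q q d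
  have p3 : qPoch q q (i + 1) = qPoch q q i * (1 - q * q ^ i) := qPoch_succ q q i
  have n1 := qPoch_q_ne_zero hq (i + 1 + d)
  have n2 := qPoch_q_ne_zero hq d
  have n3 := qPoch_q_ne_zero hq i
  have nz : ∀ j : ℕ, (1 : ℂ) - q * q ^ j ≠ 0 := fun j => by
    rw [sub_ne_zero]
    intro hh
    exact qpow_ne_one hq j (by rw [pow_succ, mul_comm, ← hh])
  have nzi := nz i
  have nzd := nz d
  rw [p1, p2, p3]
  field_simp
  ring

include hq in
lemma qBinom_trinom {k j n : ℕ} (h : k + j ≤ n) :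
    qBinom q n k * qBinom q (n - k) j = qBinom q n j * qBinom q (n - j) k := by
  obtain ⟨d, rfl⟩ : ∃ d, n = k + j + d := ⟨n - (k + j), by omega⟩
  unfold qBinom
  have e1 : k + j + d - k = j + d := by omega
  have e2 : k + j + d - j = k + d := by omega
  have e3 : j + d - j = d := by omega
  have e4 : k + d - k = d := by omega
  rw [e1, e2, e3, e4]
  have n1 := qPoch_q_ne_zero hq (k + j + d)
  have n2 := qPoch_q_ne_zero hq (j + d)
  have n3 := qPoch_q_ne_zero hq (k + d)
  have n4 := qPoch_q_ne_zero hq k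
  have n5 := qPoch_q_ne_zero hq j
  have n6 := qPoch_q_ne_zero hq d
  field_simp

include hq in
lemma series_uniq (x y : ℂ) (F G : PowerSeries ℂ)
    (hF : PowerSeries.rescale q F * (1 - CC y * PowerSeries.X) =
      F * ((1 - CC x * PowerSeries.X) * (1 - CC 1 * PowerSeries.X)))
    (hG : PowerSeries.rescale q G * (1 - CC y * PowerSeries.X) =
      G * ((1 - CC x * PowerSeries.X) * (1 - CC 1 * PowerSeries.X)))
    (h0 : PowerSeries.coeff (R := ℂ) 0 F = PowerSeries.coeff (R := ℂ) 0 G) : F = G := by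
  set H := F - G with hH
  have hrel : PowerSeries.rescale q H * (1 - CC y * PowerSeries.X) =
      H * ((1 - CC x * PowerSeries.X) * (1 - CC 1 * PowerSeries.X)) := by
    rw [hH, map_sub, sub_mul, sub_mul, hF, hG]
  have key : ∀ n, PowerSeries.coeff (R := ℂ) n H = 0 := by
    intro n
    induction n using Nat.strong_induction_on with
    | _ n ih =>
      rcases n with _ | n
      · rw [hH, map_sub, h0, sub_self]
      · have hc := congrArg (PowerSeries.coeff (R := ℂ) (n + 1)) hrel
        rw [coeff_mul_one_sub_succ, PowerSeries.coeff_rescale, PowerSeries.coeff_rescale,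
          ih n (by omega), mul_zero, mul_zero, sub_zero, ← mul_assoc,
          coeff_mul_one_sub_succ, coeff_mul_one_sub_succ] at hc
        have hn : PowerSeries.coeff (R := ℂ) n (H * (1 - CC x * PowerSeries.X)) = 0 := by
          rcases n with _ | j
          · rw [coeff_mul_one_sub_zero, ih 0 (by omega)]
          · rw [coeff_mul_one_sub_succ, ih (j + 1) (by omega), ih j (by omega),
              mul_zero, sub_zero]
        rw [hn, mul_zero, sub_zero, ih n (by omega), mul_zero, sub_zero] at hc
        have hq1 : q ^ (n + 1) - 1 ≠ 0 := sub_ne_zero.mpr (qpow_ne_one hq n)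
        have : (q ^ (n + 1) - 1) * PowerSeries.coeff (R := ℂ) (n + 1) H = 0 := by
          rw [sub_mul, one_mul, hc, sub_self]
        exact (mul_eq_zero.mp this).resolve_left hq1
  ext n
  have := key n
  rw [hH, map_sub, sub_eq_zero] at this
  exact this

include hq in
lemma AX_eq_F (x y : ℂ) : CSer q 1 y * CSer q x 0 = FSer q x y := by
  apply series_uniq hq x y
  · rw [map_mul]
    calc PowerSeries.rescale q (CSer q 1 y) * PowerSeries.rescale q (CSer q x 0) *
          (1 - CC y * PowerSeries.X)
        = (PowerSeries.rescale q (CSer q 1 y) * (1 - CC y * PowerSeries.X)) *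
          PowerSeries.rescale q (CSer q x 0) := by ring
      _ = (CSer q 1 y * (1 - CC 1 * PowerSeries.X)) *
          (CSer q x 0 * (1 - CC x * PowerSeries.X)) := by
          rw [CSrel hq 1 y]
          have h := CSrel hq x 0
          rw [map_zero, zero_mul, sub_zero, mul_one] at h
          rw [h]
      _ = _ := by ring
  · exact FsRel hq x y
  · rw [PowerSeries.coeff_mul, Finset.Nat.sum_antidiagonal_eq_sum_range_succ_mk]
    rw [coeff_FSer hq]
    simp [coeff_CSer, cauchyP_zero, qPoch_zero, hRS2, qBinom, cauchyP_zero_right]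

include hq in
lemma New1 (x y : ℂ) (n : ℕ) :
    hRS2 q x y n = ∑ k ∈ Finset.range (n + 1), qBinom q n k * qPoch y q k * x ^ (n - k) := by
  have h := congrArg (PowerSeries.coeff (R := ℂ) n) (AX_eq_F hq x y)
  rw [PowerSeries.coeff_mul, Finset.Nat.sum_antidiagonal_eq_sum_range_succ_mk,
    coeff_FSer hq] at h
  have hn := qPoch_q_ne_zero hq n
  rw [eq_div_iff hn] at h
  rw [← h, Finset.sum_mul]
  refine Finset.sum_congr rfl fun k hk => ?_
  rw [coeff_CSer, coeff_CSer, cauchyP_one_left, cauchyP_zero_right, qBinom]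
  have h1 := qPoch_q_ne_zero hq k
  have h2 := qPoch_q_ne_zero hq (n - k)
  field_simp

lemma rescale_CC (r c : ℂ) : PowerSeries.rescale r (CC c) = CC c := by
  ext n
  rcases n with _ | n <;> simp [PowerSeries.coeff_rescale, PowerSeries.coeff_C]

noncomputable def SSer (q x y : ℂ) (a : ℕ) : PowerSeries ℂ :=
  ∑ k ∈ Finset.range (a + 1),
    CC (qBinom q a k * qPoch y q k * x ^ (a - k)) * PowerSeries.rescale (q ^ k) (CSer q x y)

noncomputable def TSer (q x y : ℂ) (a : ℕ) : PowerSeries ℂ :=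
  ∑ k ∈ Finset.range (a + 1),
    CC (qBinom q a k * qPoch y q k * x ^ (a - k)) * PowerSeries.rescale (q ^ (k + 1)) (CSer q x y)

lemma rescale_SSer (q x y : ℂ) (a : ℕ) :
    PowerSeries.rescale q (SSer q x y a) = TSer q x y a := by
  unfold SSer TSer
  rw [map_sum]
  refine Finset.sum_congr rfl fun k _ => ?_
  rw [map_mul, rescale_CC, PowerSeries.rescale_rescale, ← pow_succ]

include hq in
lemma delta_bracket (x y : ℂ) (k : ℕ) :
    PowerSeries.rescale (q ^ k) (CSer q x y)
      - (1 - CC 1 * PowerSeries.X) * PowerSeries.rescale (q ^ (k + 1)) (CSer q x y) =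
    CC (x * q ^ k) * PowerSeries.rescale (q ^ k) (CSer q x y) * PowerSeries.X
      + CC (1 - y * q ^ k) * PowerSeries.rescale (q ^ (k + 1)) (CSer q x y) * PowerSeries.X := by
  have h := Delta_rel hq x y k
  rw [map_sub, map_one]
  linear_combination -h

include hq in
lemma S_step (x y : ℂ) (a : ℕ) :
    SSer q x y (a + 1) * PowerSeries.X =
      SSer q x y a - (1 - CC 1 * PowerSeries.X) * TSer q x y a := by
  unfold SSer TSer
  rw [Finset.mul_sum, ← Finset.sum_sub_distrib, Finset.sum_mul]
  have hrhs : ∀ k ∈ Finset.range (a + 1),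
      CC (qBinom q a k * qPoch y q k * x ^ (a - k)) * PowerSeries.rescale (q ^ k) (CSer q x y)
        - (1 - CC 1 * PowerSeries.X) *
          (CC (qBinom q a k * qPoch y q k * x ^ (a - k)) *
            PowerSeries.rescale (q ^ (k + 1)) (CSer q x y)) =
      CC (qBinom q a k * qPoch y q k * x ^ (a - k) * (x * q ^ k)) *
          PowerSeries.rescale (q ^ k) (CSer q x y) * PowerSeries.X
        + CC (qBinom q a k * qPoch y q k * x ^ (a - k) * (1 - y * q ^ k)) *
          PowerSeries.rescale (q ^ (k + 1)) (CSer q x y) * PowerSeries.X := by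
    intro k _
    have h := delta_bracket hq x y k
    simp only [map_mul] at h ⊢
    linear_combination CC (qBinom q a k) * CC (qPoch y q k) * CC (x ^ (a - k)) * h
  rw [Finset.sum_congr rfl hrhs, Finset.sum_add_distrib]
  -- Now pure index manipulation
  rw [Finset.sum_range_succ' (fun k => CC (qBinom q (a+1) k * qPoch y q k * x ^ (a+1-k)) *
        PowerSeries.rescale (q ^ k) (CSer q x y) * PowerSeries.X) (a + 1)]
  rw [Finset.sum_range_succ (fun i => CC (qBinom q (a+1) (i+1) * qPoch y q (i+1) * x ^ (a+1-(i+1))) *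
        PowerSeries.rescale (q ^ (i+1)) (CSer q x y) * PowerSeries.X) a]
  rw [Finset.sum_range_succ' (fun k => CC (qBinom q a k * qPoch y q k * x ^ (a-k) * (x * q ^ k)) *
        PowerSeries.rescale (q ^ k) (CSer q x y) * PowerSeries.X) a]
  rw [Finset.sum_range_succ (fun k => CC (qBinom q a k * qPoch y q k * x ^ (a-k) * (1 - y * q ^ k)) *
        PowerSeries.rescale (q ^ (k+1)) (CSer q x y) * PowerSeries.X) a]
  have edge0 : qBinom q (a+1) 0 * qPoch y q 0 * x ^ (a+1-0) =
      qBinom q a 0 * qPoch y q 0 * x ^ (a-0) * (x * q ^ 0) := by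
    rw [qBinom_zero' hq, qBinom_zero' hq, qPoch_zero]
    simp [pow_succ]
  have edgeT : qBinom q (a+1) (a+1) * qPoch y q (a+1) * x ^ (a+1-(a+1)) =
      qBinom q a a * qPoch y q a * x ^ (a-a) * (1 - y * q ^ a) := by
    rw [qBinom_self hq, qBinom_self hq, qPoch_succ, Nat.sub_self, Nat.sub_self]
    ring
  have mid : ∀ i ∈ Finset.range a,
      CC (qBinom q (a+1) (i+1) * qPoch y q (i+1) * x ^ (a+1-(i+1))) *
        PowerSeries.rescale (q ^ (i+1)) (CSer q x y) * PowerSeries.X =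
      CC (qBinom q a (i+1) * qPoch y q (i+1) * x ^ (a-(i+1)) * (x * q ^ (i+1))) *
        PowerSeries.rescale (q ^ (i+1)) (CSer q x y) * PowerSeries.X
      + CC (qBinom q a i * qPoch y q i * x ^ (a-i) * (1 - y * q ^ i)) *
        PowerSeries.rescale (q ^ (i+1)) (CSer q x y) * PowerSeries.X := by
    intro i hi
    rw [Finset.mem_range] at hi
    have hscal : qBinom q (a+1) (i+1) * qPoch y q (i+1) * x ^ (a+1-(i+1)) =
        qBinom q a (i+1) * qPoch y q (i+1) * x ^ (a-(i+1)) * (x * q ^ (i+1))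
        + qBinom q a i * qPoch y q i * x ^ (a-i) * (1 - y * q ^ i) := by
      rw [qBinom_pascal hq (by omega : i + 1 ≤ a), qPoch_succ]
      have e1 : a + 1 - (i + 1) = a - i := by omega
      have e2 : x ^ (a - (i+1)) * x = x ^ (a - i) := by
        rw [← pow_succ]
        congr 1
        omega
      rw [e1, ← e2]
      ring
    rw [hscal, map_add, add_mul, add_mul]
  rw [Finset.sum_congr rfl mid, Finset.sum_add_distrib]
  rw [edge0, edgeT]
  ring

include hq in
lemma core_series (x y : ℂ) : ∀ a : ℕ,
    CSer q x y * GSer q x y a = SSer q x y a * FSer q x y := by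
  intro a
  induction a with
  | zero =>
      rw [GSer_zero hq, SSer, Finset.sum_range_one]
      rw [qBinom_zero' hq, qPoch_zero, pow_zero, pow_zero, PowerSeries.rescale_one]
      simp
  | succ a ih =>
      have hne : (PowerSeries.X : PowerSeries ℂ) * (1 - CC x * PowerSeries.X) ≠ 0 := by
        apply mul_ne_zero PowerSeries.X_ne_zero
        intro h
        have := congrArg (PowerSeries.constantCoeff (R := ℂ)) h
        simp at this
      apply mul_left_cancel₀ hne
      calc PowerSeries.X * (1 - CC x * PowerSeries.X) * (CSer q x y * GSer q x y (a+1))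
          = (PowerSeries.X * GSer q x y (a+1)) * ((1 - CC x * PowerSeries.X) * CSer q x y) := by
            ring
        _ = (GSer q x y a - PowerSeries.rescale q (GSer q x y a)) *
              ((1 - CC x * PowerSeries.X) * CSer q x y) := by rw [GSer_shift hq]
        _ = (CSer q x y * GSer q x y a) * (1 - CC x * PowerSeries.X)
              - PowerSeries.rescale q (GSer q x y a) *
                (PowerSeries.rescale q (CSer q x y) * (1 - CC y * PowerSeries.X)) := by
            rw [CSrel hq x y]; ring
        _ = (CSer q x y * GSer q x y a) * (1 - CC x * PowerSeries.X)
              - PowerSeries.rescale q (CSer q x y * GSer q x y a) * (1 - CC y * PowerSeries.X) := by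
            rw [map_mul]; ring
        _ = (SSer q x y a * FSer q x y) * (1 - CC x * PowerSeries.X)
              - PowerSeries.rescale q (SSer q x y a * FSer q x y) * (1 - CC y * PowerSeries.X) := by
            rw [ih]
        _ = SSer q x y a * FSer q x y * (1 - CC x * PowerSeries.X)
              - TSer q x y a * (PowerSeries.rescale q (FSer q x y) * (1 - CC y * PowerSeries.X)) := by
            rw [map_mul, rescale_SSer]; ring
        _ = SSer q x y a * FSer q x y * (1 - CC x * PowerSeries.X)
              - TSer q x y a * (FSer q x y * ((1 - CC x * PowerSeries.X) * (1 - CC 1 * PowerSeries.X))) := by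
            rw [FsRel hq]
        _ = (FSer q x y * (1 - CC x * PowerSeries.X)) *
              (SSer q x y a - (1 - CC 1 * PowerSeries.X) * TSer q x y a) := by ring
        _ = (FSer q x y * (1 - CC x * PowerSeries.X)) * (SSer q x y (a+1) * PowerSeries.X) := by
            rw [S_step hq]
        _ = PowerSeries.X * (1 - CC x * PowerSeries.X) * (SSer q x y (a+1) * FSer q x y) := by
            ring

include hq in
lemma core_coeff (x y : ℂ) (a b : ℕ) :
    ∑ l ∈ Finset.range (b + 1), qBinom q b l * cauchyP q x y l * hRS2 q x y (a + (b - l)) =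
    ∑ k ∈ Finset.range (a + 1), ∑ l ∈ Finset.range (b + 1),
      qBinom q a k * qPoch y q k * x ^ (a - k) * q ^ (k * l) * qBinom q b l *
        cauchyP q x y l * hRS2 q x y (b - l) := by
  have h := congrArg (PowerSeries.coeff (R := ℂ) b) (core_series hq x y a)
  rw [PowerSeries.coeff_mul, Finset.Nat.sum_antidiagonal_eq_sum_range_succ_mk,
    SSer, Finset.sum_mul, map_sum] at h
  have hterm : ∀ k ∈ Finset.range (a + 1),
      PowerSeries.coeff (R := ℂ) b
        (CC (qBinom q a k * qPoch y q k * x ^ (a - k)) *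
          PowerSeries.rescale (q ^ k) (CSer q x y) * FSer q x y) =
      qBinom q a k * qPoch y q k * x ^ (a - k) *
        ∑ l ∈ Finset.range (b + 1),
          q ^ (k * l) * (cauchyP q x y l / qPoch q q l) *
            (hRS2 q x y (b - l) / qPoch q q (b - l)) := by
    intro k _
    rw [mul_assoc, PowerSeries.coeff_C_mul, PowerSeries.coeff_mul,
      Finset.Nat.sum_antidiagonal_eq_sum_range_succ_mk]
    congr 1
    refine Finset.sum_congr rfl fun l _ => ?_
    rw [PowerSeries.coeff_rescale, coeff_CSer, coeff_FSer hq, ← pow_mul]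
  rw [Finset.sum_congr rfl hterm] at h
  have e1 : ∑ l ∈ Finset.range (b + 1), qBinom q b l * cauchyP q x y l *
      hRS2 q x y (a + (b - l)) =
      qPoch q q b * ∑ l ∈ Finset.range (b + 1),
        PowerSeries.coeff (R := ℂ) l (CSer q x y) * PowerSeries.coeff (R := ℂ) (b - l) (GSer q x y a) := by
    rw [Finset.mul_sum]
    refine Finset.sum_congr rfl fun l _ => ?_
    rw [coeff_CSer, GSer, PowerSeries.coeff_mk,
      show qBinom q b l = qPoch q q b / (qPoch q q l * qPoch q q (b - l)) from rfl]
    have h1 := qPoch_q_ne_zero hq l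
    have h2 := qPoch_q_ne_zero hq (b - l)
    field_simp
  have e2 : ∑ k ∈ Finset.range (a + 1), ∑ l ∈ Finset.range (b + 1),
      qBinom q a k * qPoch y q k * x ^ (a - k) * q ^ (k * l) * qBinom q b l *
        cauchyP q x y l * hRS2 q x y (b - l) =
      qPoch q q b * ∑ k ∈ Finset.range (a + 1),
        qBinom q a k * qPoch y q k * x ^ (a - k) *
          ∑ l ∈ Finset.range (b + 1),
            q ^ (k * l) * (cauchyP q x y l / qPoch q q l) *
              (hRS2 q x y (b - l) / qPoch q q (b - l)) := by
    rw [Finset.mul_sum]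
    refine Finset.sum_congr rfl fun k _ => ?_
    rw [Finset.mul_sum, Finset.mul_sum]
    refine Finset.sum_congr rfl fun l _ => ?_
    rw [show qBinom q b l = qPoch q q b / (qPoch q q l * qPoch q q (b - l)) from rfl]
    have h1 := qPoch_q_ne_zero hq l
    have h2 := qPoch_q_ne_zero hq (b - l)
    field_simp
  rw [e1, e2, h]

noncomputable def Kker (q x y : ℂ) (m t : ℕ) : ℂ :=
  ∑ l ∈ Finset.range (m + 1),
    q ^ (t * l) * qBinom q m l * cauchyP q x y l * hRS2 q x y (m - l)

lemma tri_expand (n : ℕ) (g : ℕ → ℕ → ℂ) :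
    ∑ k ∈ Finset.range (n + 1), ∑ j ∈ Finset.range (n - k + 1), g k j =
    ∑ k ∈ Finset.range (n + 1), ∑ j ∈ Finset.range (n + 1),
      if k + j ≤ n then g k j else 0 := by
  refine Finset.sum_congr rfl fun k hk => ?_
  rw [Finset.mem_range] at hk
  rw [← Finset.sum_subset (Finset.range_subset_range.mpr (by omega : n - k + 1 ≤ n + 1))]
  · refine Finset.sum_congr rfl fun j hj => ?_
    rw [Finset.mem_range] at hj
    rw [if_pos (by omega)]
  · intro j hj hj2
    rw [Finset.mem_range] at hj
    rw [Finset.mem_range] at hj2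
    rw [if_neg (by omega)]

lemma tri_swap (n : ℕ) (g : ℕ → ℕ → ℂ) :
    ∑ k ∈ Finset.range (n + 1), ∑ j ∈ Finset.range (n - k + 1), g k j =
    ∑ k ∈ Finset.range (n + 1), ∑ j ∈ Finset.range (n - k + 1), g j k := by
  rw [tri_expand n g, tri_expand n (fun k j => g j k), Finset.sum_comm]
  refine Finset.sum_congr rfl fun k _ => Finset.sum_congr rfl fun j _ => ?_
  rw [Nat.add_comm j k]

end RogersAux

/-- Linearization identity derived from the Rogers formula (Corollary 3.2). -/
theorem linearization_from_rogers (q x y : ℂ) (hq : ‖q‖ < 1) (n m : ℕ) :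
    ∑ k ∈ Finset.range (n + 1), ∑ l ∈ Finset.range (m + 1),
      qBinom q n k * qBinom q m l * qPoch y q k * cauchyP q x y l *
        hRS2 q x y (n + m - k - l) =
    ∑ k ∈ Finset.range (n + 1), ∑ l ∈ Finset.range (m + 1),
      qBinom q n k * qBinom q m l * qPoch y q k * q ^ (k * l) * cauchyP q x y l *
        hRS2 q x y (n - k) * hRS2 q x y (m - l) := by
  open RogersAux in
  have hK : ∀ t, Kker q x y m t = ∑ l ∈ Finset.range (m + 1),
      q ^ (t * l) * qBinom q m l * cauchyP q x y l * hRS2 q x y (m - l) := fun t => rfl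
  have hLHS : ∑ k ∈ Finset.range (n + 1), ∑ l ∈ Finset.range (m + 1),
      qBinom q n k * qBinom q m l * qPoch y q k * cauchyP q x y l *
        hRS2 q x y (n + m - k - l) =
      ∑ k ∈ Finset.range (n + 1), ∑ j ∈ Finset.range (n - k + 1),
        qBinom q n k * qPoch y q k *
          (qBinom q (n - k) j * qPoch y q j * x ^ (n - k - j)) * Kker q x y m j := by
    refine Finset.sum_congr rfl fun k hk => ?_
    rw [Finset.mem_range] at hk
    have step1 : ∑ l ∈ Finset.range (m + 1),
        qBinom q n k * qBinom q m l * qPoch y q k * cauchyP q x y l *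
          hRS2 q x y (n + m - k - l) =
        qBinom q n k * qPoch y q k * ∑ l ∈ Finset.range (m + 1),
          qBinom q m l * cauchyP q x y l * hRS2 q x y ((n - k) + (m - l)) := by
      rw [Finset.mul_sum]
      refine Finset.sum_congr rfl fun l hl => ?_
      rw [Finset.mem_range] at hl
      have : n + m - k - l = (n - k) + (m - l) := by omega
      rw [this]
      ring
    rw [step1, core_coeff hq x y (n - k) m, Finset.mul_sum]
    refine Finset.sum_congr rfl fun j hj => ?_
    rw [hK j, Finset.mul_sum, Finset.mul_sum]
    refine Finset.sum_congr rfl fun l hl => ?_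
    ring
  have hRHS : ∑ k ∈ Finset.range (n + 1), ∑ l ∈ Finset.range (m + 1),
      qBinom q n k * qBinom q m l * qPoch y q k * q ^ (k * l) * cauchyP q x y l *
        hRS2 q x y (n - k) * hRS2 q x y (m - l) =
      ∑ k ∈ Finset.range (n + 1), ∑ j ∈ Finset.range (n - k + 1),
        qBinom q n k * qPoch y q k *
          (qBinom q (n - k) j * qPoch y q j * x ^ (n - k - j)) * Kker q x y m k := by
    refine Finset.sum_congr rfl fun k hk => ?_
    have step1 : ∑ l ∈ Finset.range (m + 1),
        qBinom q n k * qBinom q m l * qPoch y q k * q ^ (k * l) * cauchyP q x y l *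
          hRS2 q x y (n - k) * hRS2 q x y (m - l) =
        qBinom q n k * qPoch y q k * hRS2 q x y (n - k) * Kker q x y m k := by
      rw [hK k, Finset.mul_sum]
      refine Finset.sum_congr rfl fun l hl => ?_
      ring
    rw [step1, New1 hq x y (n - k), Finset.mul_sum, Finset.sum_mul]
  rw [hLHS, hRHS]
  rw [tri_swap n (fun k j => qBinom q n k * qPoch y q k *
    (qBinom q (n - k) j * qPoch y q j * x ^ (n - k - j)) * Kker q x y m j)]
  refine Finset.sum_congr rfl fun k hk => Finset.sum_congr rfl fun j hj => ?_
  rw [Finset.mem_range] at hk hj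
  have e : n - j - k = n - k - j := by omega
  have ht := qBinom_trinom hq (show k + j ≤ n by omega)
  rw [e]
  linear_combination (-(qPoch y q j * qPoch y q k * x ^ (n - k - j) * Kker q x y m k)) * ht
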